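/- Let N ≥ 1, r ≥ 1 be integers and let ρ : ℝ → ℝ be measurable such that for every (x,s) ∈ ℝ², ∫ (1+|λ|)^{(N−1)(r+1)} |ρ(λ)| e^{xλ+sλ^r} dλ < ∞. Then Φ(x,s) := ∫ ρ(λ) e^{xλ+sλ^r} dλ has partial derivatives ∂_x^{i−1}∂_s^{j−1} Φ(x,s) = ∫ λ^{(i−1)+r(j−1)} ρ(λ) e^{xλ+sλ^r} dλ, and for every (x,s): det( ∂_x^{i−1}∂_s^{j−1} Φ(x,s) )_{i,j=1,…,N} = (1/N!) ∫_{ℝ^N} ∏_{1≤j<i≤N} (λ_i − λ_j)(λ_i^r − λ_j^r) · ∏_{k=1}^N ρ(λ_k) e^{xλ_k + sλ_k^r} dλ. (This is the spectral 'eigenvalue-integral' representation of the tau-functions of Darboux–Bäcklund orbits of the constrained cKP_{r,1} hierarchy.) -/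

import Mathlib

open MeasureTheory

namespace Stmt7Aux

noncomputable def g (r k : ℕ) (ρ : ℝ → ℝ) (x s l : ℝ) : ℝ :=
  l ^ k * ρ l * Real.exp (x * l + s * l ^ r)

noncomputable def I (r k : ℕ) (ρ : ℝ → ℝ) (x s : ℝ) : ℝ := ∫ l : ℝ, g r k ρ x s l

lemma exp_bound {a b t : ℝ} (h : |a - b| ≤ 1) :
    Real.exp (a * t) ≤ Real.exp (b * t + t) + Real.exp (b * t - t) := by
  have h1 : a * t ≤ b * t + |t| := by
    have : (a - b) * t ≤ |t| := by
      calc (a - b) * t ≤ |(a - b) * t| := le_abs_self _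
        _ = |a - b| * |t| := abs_mul _ _
        _ ≤ 1 * |t| := by gcongr
        _ = |t| := one_mul _
    nlinarith
  rcases abs_cases t with ⟨ht, _⟩ | ⟨ht, _⟩ <;> rw [ht] at h1
  · exact le_trans (Real.exp_le_exp.2 h1) (le_add_of_nonneg_right (Real.exp_pos _).le)
  · have : a * t ≤ b * t - t := by linarith
    exact le_trans (Real.exp_le_exp.2 this) (le_add_of_nonneg_left (Real.exp_pos _).le)

variable {N r : ℕ} {ρ : ℝ → ℝ}

lemma measurable_g (hρ : Measurable ρ) (r k : ℕ) (x s : ℝ) : Measurable (g r k ρ x s) := by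
  unfold g
  exact ((measurable_id.pow_const k).mul hρ).mul
    (((measurable_const.mul measurable_id).add
      (measurable_const.mul (measurable_id.pow_const r))).exp)

lemma continuous_g_x (r k : ℕ) (s l : ℝ) : Continuous (fun x => g r k ρ x s l) := by
  unfold g
  exact continuous_const.mul (((continuous_id.mul continuous_const).add continuous_const).rexp)

lemma continuous_g_s (r k : ℕ) (x l : ℝ) : Continuous (fun s => g r k ρ x s l) := by
  unfold g
  exact continuous_const.mul ((continuous_const.add (continuous_id.mul continuous_const)).rexp)

lemma hasDerivAt_g_x (r k : ℕ) (s l x : ℝ) :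
    HasDerivAt (fun x => g r k ρ x s l) (g r (k+1) ρ x s l) x := by
  have h1 : HasDerivAt (fun x : ℝ => x * l + s * l ^ r) l x :=
    (hasDerivAt_mul_const l).add_const _
  have h2 := (h1.exp).const_mul (l ^ k * ρ l)
  have e : g r (k+1) ρ x s l = l ^ k * ρ l * (Real.exp (x * l + s * l ^ r) * l) := by
    simp [g, pow_succ]; ring
  rw [e]; exact h2

lemma hasDerivAt_g_s (r k : ℕ) (x l s : ℝ) :
    HasDerivAt (fun s => g r k ρ x s l) (g r (k+r) ρ x s l) s := by
  have h1 : HasDerivAt (fun s : ℝ => x * l + s * l ^ r) (l ^ r) s :=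
    (hasDerivAt_mul_const (l ^ r)).const_add _
  have h2 := (h1.exp).const_mul (l ^ k * ρ l)
  have e : g r (k+r) ρ x s l = l ^ k * ρ l * (Real.exp (x * l + s * l ^ r) * l ^ r) := by
    simp [g, pow_add]; ring
  rw [e]; exact h2

lemma abs_g_le (r k : ℕ) (M : ℕ) (hk : k ≤ M) (x s l : ℝ) :
    |g r k ρ x s l| ≤ (1 + |l|) ^ M * |ρ l| * Real.exp (x * l + s * l ^ r) := by
  unfold g
  rw [abs_mul, abs_mul, Real.abs_exp, abs_pow]
  have h1 : |l| ^ k ≤ (1 + |l|) ^ M := by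
    calc |l| ^ k ≤ (1 + |l|) ^ k := by
          apply pow_le_pow_left₀ (abs_nonneg l); linarith
      _ ≤ (1 + |l|) ^ M := by
          apply pow_le_pow_right₀ (by linarith [abs_nonneg l]) hk
  gcongr

section B
open Metric

variable {N r : ℕ} {ρ : ℝ → ℝ} {M : ℕ}

lemma integrable_g (hρ : Measurable ρ)
    (hint : ∀ x s : ℝ, Integrable (fun l : ℝ =>
      (1 + |l|) ^ M * |ρ l| * Real.exp (x * l + s * l ^ r)))
    {k : ℕ} (hk : k ≤ M) (x s : ℝ) : Integrable (g r k ρ x s) := by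
  refine (hint x s).mono ((measurable_g hρ r k x s).aestronglyMeasurable)
    (Filter.Eventually.of_forall fun l => ?_)
  rw [Real.norm_eq_abs, Real.norm_eq_abs]
  exact le_trans (abs_g_le r k M hk x s l) (le_abs_self _)

lemma g_bound_x {k : ℕ} (hk : k ≤ M) {x x₀ : ℝ} (h : |x - x₀| ≤ 1) (s l : ℝ) :
    |g r k ρ x s l| ≤ (1 + |l|) ^ M * |ρ l| *
      (Real.exp ((x₀+1) * l + s * l ^ r) + Real.exp ((x₀-1) * l + s * l ^ r)) := by
  refine le_trans (abs_g_le r k M hk x s l) ?_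
  have h2 : Real.exp (x * l + s * l ^ r) ≤
      Real.exp ((x₀+1) * l + s * l ^ r) + Real.exp ((x₀-1) * l + s * l ^ r) := by
    calc Real.exp (x * l + s * l ^ r) = Real.exp (x * l) * Real.exp (s * l ^ r) :=
          Real.exp_add _ _
      _ ≤ (Real.exp (x₀ * l + l) + Real.exp (x₀ * l - l)) * Real.exp (s * l ^ r) :=
          mul_le_mul_of_nonneg_right (exp_bound h) (Real.exp_pos _).le
      _ = _ := by rw [add_mul, ← Real.exp_add, ← Real.exp_add]; ring_nf
  have hP : (0:ℝ) ≤ (1 + |l|) ^ M * |ρ l| := by positivity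
  calc (1 + |l|) ^ M * |ρ l| * Real.exp (x * l + s * l ^ r)
      ≤ (1 + |l|) ^ M * |ρ l| * (Real.exp ((x₀+1) * l + s * l ^ r)
        + Real.exp ((x₀-1) * l + s * l ^ r)) := mul_le_mul_of_nonneg_left h2 hP

lemma g_bound_s {k : ℕ} (hk : k ≤ M) {s s₀ : ℝ} (h : |s - s₀| ≤ 1) (x l : ℝ) :
    |g r k ρ x s l| ≤ (1 + |l|) ^ M * |ρ l| *
      (Real.exp (x * l + (s₀+1) * l ^ r) + Real.exp (x * l + (s₀-1) * l ^ r)) := by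
  refine le_trans (abs_g_le r k M hk x s l) ?_
  have h2 : Real.exp (x * l + s * l ^ r) ≤
      Real.exp (x * l + (s₀+1) * l ^ r) + Real.exp (x * l + (s₀-1) * l ^ r) := by
    calc Real.exp (x * l + s * l ^ r) = Real.exp (s * l ^ r) * Real.exp (x * l) := by
          rw [← Real.exp_add]; ring_nf
      _ ≤ (Real.exp (s₀ * l ^ r + l ^ r) + Real.exp (s₀ * l ^ r - l ^ r)) * Real.exp (x * l) :=
          mul_le_mul_of_nonneg_right (exp_bound h) (Real.exp_pos _).le
      _ = _ := by rw [add_mul, ← Real.exp_add, ← Real.exp_add]; ring_nf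
  have hP : (0:ℝ) ≤ (1 + |l|) ^ M * |ρ l| := by positivity
  exact mul_le_mul_of_nonneg_left h2 hP

lemma integrable_bound_x
    (hint : ∀ x s : ℝ, Integrable (fun l : ℝ =>
      (1 + |l|) ^ M * |ρ l| * Real.exp (x * l + s * l ^ r)))
    (x₀ s : ℝ) : Integrable (fun l : ℝ => (1 + |l|) ^ M * |ρ l| *
      (Real.exp ((x₀+1) * l + s * l ^ r) + Real.exp ((x₀-1) * l + s * l ^ r))) := by
  have := (hint (x₀+1) s).add (hint (x₀-1) s)
  exact this.congr (Filter.Eventually.of_forall fun l => by simp [mul_add])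

lemma integrable_bound_s
    (hint : ∀ x s : ℝ, Integrable (fun l : ℝ =>
      (1 + |l|) ^ M * |ρ l| * Real.exp (x * l + s * l ^ r)))
    (x s₀ : ℝ) : Integrable (fun l : ℝ => (1 + |l|) ^ M * |ρ l| *
      (Real.exp (x * l + (s₀+1) * l ^ r) + Real.exp (x * l + (s₀-1) * l ^ r))) := by
  have := (hint x (s₀+1)).add (hint x (s₀-1))
  exact this.congr (Filter.Eventually.of_forall fun l => by simp [mul_add])

variable (hρ : Measurable ρ)
  (hint : ∀ x s : ℝ, Integrable (fun l : ℝ =>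
      (1 + |l|) ^ M * |ρ l| * Real.exp (x * l + s * l ^ r)))

include hρ hint

lemma hasDerivAt_I_x {k : ℕ} (hk : k + 1 ≤ M) (s x₀ : ℝ) :
    HasDerivAt (fun x => I r k ρ x s) (I r (k+1) ρ x₀ s) x₀ := by
  unfold I
  refine (hasDerivAt_integral_of_dominated_loc_of_deriv_le (F := fun x l => g r k ρ x s l)
    (F' := fun x l => g r (k+1) ρ x s l)
    (bound := fun l => (1 + |l|) ^ M * |ρ l| *
      (Real.exp ((x₀+1) * l + s * l ^ r) + Real.exp ((x₀-1) * l + s * l ^ r)))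
    (Metric.ball_mem_nhds x₀ one_pos)
    (Filter.Eventually.of_forall fun x => (measurable_g hρ r k x s).aestronglyMeasurable)
    (integrable_g hρ hint (le_trans (Nat.le_succ k) hk) x₀ s)
    ((measurable_g hρ r (k+1) x₀ s).aestronglyMeasurable)
    (Filter.Eventually.of_forall fun l => fun x hx => ?_)
    (integrable_bound_x hint x₀ s)
    (Filter.Eventually.of_forall fun l => fun x _ => hasDerivAt_g_x r k s l x)).2
  rw [Real.norm_eq_abs]
  rw [mem_ball, Real.dist_eq] at hx
  exact g_bound_x hk hx.le s l

lemma hasDerivAt_I_s {k : ℕ} (hk : k + r ≤ M) (x s₀ : ℝ) :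
    HasDerivAt (fun s => I r k ρ x s) (I r (k+r) ρ x s₀) s₀ := by
  unfold I
  refine (hasDerivAt_integral_of_dominated_loc_of_deriv_le (F := fun s l => g r k ρ x s l)
    (F' := fun s l => g r (k+r) ρ x s l)
    (bound := fun l => (1 + |l|) ^ M * |ρ l| *
      (Real.exp (x * l + (s₀+1) * l ^ r) + Real.exp (x * l + (s₀-1) * l ^ r)))
    (Metric.ball_mem_nhds s₀ one_pos)
    (Filter.Eventually.of_forall fun s => (measurable_g hρ r k x s).aestronglyMeasurable)
    (integrable_g hρ hint (le_trans (Nat.le_add_right k r) hk) x s₀)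
    ((measurable_g hρ r (k+r) x s₀).aestronglyMeasurable)
    (Filter.Eventually.of_forall fun l => fun s hs => ?_)
    (integrable_bound_s hint x s₀)
    (Filter.Eventually.of_forall fun l => fun s _ => hasDerivAt_g_s r k x l s)).2
  rw [Real.norm_eq_abs]
  rw [mem_ball, Real.dist_eq] at hs
  exact g_bound_s hk hs.le x l

lemma continuous_I_x {k : ℕ} (hk : k ≤ M) (s : ℝ) :
    Continuous (fun x => I r k ρ x s) := by
  rw [continuous_iff_continuousAt]
  intro x₀
  refine continuousAt_of_dominated (F := fun x l => g r k ρ x s l)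
    (bound := fun l => (1 + |l|) ^ M * |ρ l| *
      (Real.exp ((x₀+1) * l + s * l ^ r) + Real.exp ((x₀-1) * l + s * l ^ r)))
    (Filter.Eventually.of_forall fun x => (measurable_g hρ r k x s).aestronglyMeasurable)
    ?_ (integrable_bound_x hint x₀ s)
    (Filter.Eventually.of_forall fun l => (continuous_g_x r k s l).continuousAt)
  filter_upwards [Metric.ball_mem_nhds x₀ one_pos] with x hx
  refine Filter.Eventually.of_forall fun l => ?_
  rw [Real.norm_eq_abs]
  rw [mem_ball, Real.dist_eq] at hx
  exact g_bound_x hk hx.le s l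

lemma continuous_I_s {k : ℕ} (hk : k ≤ M) (x : ℝ) :
    Continuous (fun s => I r k ρ x s) := by
  rw [continuous_iff_continuousAt]
  intro s₀
  refine continuousAt_of_dominated (F := fun s l => g r k ρ x s l)
    (bound := fun l => (1 + |l|) ^ M * |ρ l| *
      (Real.exp (x * l + (s₀+1) * l ^ r) + Real.exp (x * l + (s₀-1) * l ^ r)))
    (Filter.Eventually.of_forall fun s => (measurable_g hρ r k x s).aestronglyMeasurable)
    ?_ (integrable_bound_s hint x s₀)
    (Filter.Eventually.of_forall fun l => (continuous_g_s r k x l).continuousAt)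
  filter_upwards [Metric.ball_mem_nhds s₀ one_pos] with s hs
  refine Filter.Eventually.of_forall fun l => ?_
  rw [Real.norm_eq_abs]
  rw [mem_ball, Real.dist_eq] at hs
  exact g_bound_s hk hs.le x l

lemma deriv_I_x {k : ℕ} (hk : k + 1 ≤ M) (s : ℝ) :
    deriv (fun x => I r k ρ x s) = fun x => I r (k+1) ρ x s :=
  funext fun x₀ => (hasDerivAt_I_x hρ hint hk s x₀).deriv

lemma deriv_I_s {k : ℕ} (hk : k + r ≤ M) (x : ℝ) :
    deriv (fun s => I r k ρ x s) = fun s => I r (k+r) ρ x s :=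
  funext fun s₀ => (hasDerivAt_I_s hρ hint hk x s₀).deriv

lemma contDiff_I_x (hr : 1 ≤ r) : ∀ (n k : ℕ), k + n ≤ M → ∀ s,
    ContDiff ℝ ((n:ℕ):ℕ∞) (fun x => I r k ρ x s) := by
  intro n
  induction n with
  | zero =>
      intro k hk s
      simpa using ((contDiff_zero (𝕜 := ℝ)).2 (continuous_I_x hρ hint (by omega) s))
  | succ n ih =>
      intro k hk s
      have hc : (((n+1:ℕ)):ℕ∞) = ((n:ℕ∞) + 1 : ℕ∞) := by push_cast; ring
      rw [hc]
      have h2 : ContDiff ℝ (((n:ℕ∞):WithTop ℕ∞) + 1) (fun x => I r k ρ x s) := by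
        rw [contDiff_succ_iff_deriv]
        refine ⟨fun x₀ => (hasDerivAt_I_x hρ hint (by omega) s x₀).differentiableAt,
          fun hω => absurd hω (by simp), ?_⟩
        rw [deriv_I_x hρ hint (by omega) s]
        exact ih (k+1) (by omega) s
      exact_mod_cast h2

lemma contDiff_I_s (hr : 1 ≤ r) : ∀ (n k : ℕ), k + r * n ≤ M → ∀ x,
    ContDiff ℝ ((n:ℕ):ℕ∞) (fun s => I r k ρ x s) := by
  intro n
  induction n with
  | zero =>
      intro k hk x
      simpa using ((contDiff_zero (𝕜 := ℝ)).2 (continuous_I_s hρ hint (by omega) x))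
  | succ n ih =>
      intro k hk x
      have hrn : k + r + r * n ≤ M := by
        have : r * (n+1) = r * n + r := by ring
        omega
      have hc : (((n+1:ℕ)):ℕ∞) = ((n:ℕ∞) + 1 : ℕ∞) := by push_cast; ring
      rw [hc]
      have h2 : ContDiff ℝ (((n:ℕ∞):WithTop ℕ∞) + 1) (fun s => I r k ρ x s) := by
        rw [contDiff_succ_iff_deriv]
        refine ⟨fun s₀ => (hasDerivAt_I_s hρ hint (by omega) x s₀).differentiableAt,
          fun hω => absurd hω (by simp), ?_⟩
        rw [deriv_I_s hρ hint (by omega) x]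
        exact ih (k+r) hrn x
      exact_mod_cast h2

lemma iter_I_s (hr : 1 ≤ r) : ∀ (j k : ℕ), k + r * j ≤ M → ∀ x s,
    iteratedDeriv j (fun s => I r k ρ x s) s = I r (k + r * j) ρ x s := by
  intro j
  induction j with
  | zero => intro k hk x s; simp
  | succ j ih =>
      intro k hk x s
      have h1 : k + r + r * j ≤ M := by
        have : r * (j+1) = r * j + r := by ring
        omega
      rw [iteratedDeriv_succ', deriv_I_s hρ hint (by omega) x, ih (k+r) h1 x s]
      congr 1
      ring

lemma iter_I_x (hr : 1 ≤ r) : ∀ (i k : ℕ), k + i ≤ M → ∀ x s,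
    iteratedDeriv i (fun x => I r k ρ x s) x = I r (k + i) ρ x s := by
  intro i
  induction i with
  | zero => intro k hk x s; simp
  | succ i ih =>
      intro k hk x s
      rw [iteratedDeriv_succ', deriv_I_x hρ hint (by omega) s, ih (k+1) (by omega) x s]
      congr 1
      ring

end B
section Andreief
open Finset Equiv Matrix

variable {N r : ℕ} {ρ : ℝ → ℝ}

lemma andreief (hρ : Measurable ρ)
    (hint : ∀ x s : ℝ, Integrable (fun l : ℝ =>
      (1 + |l|) ^ ((N - 1) * (r + 1)) * |ρ l| * Real.exp (x * l + s * l ^ r)))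
    (hN : 1 ≤ N) (x s : ℝ) :
    Matrix.det (Matrix.of fun i j : Fin N => I r ((i:ℕ) + r * (j:ℕ)) ρ x s) =
      (1 / (N.factorial : ℝ)) *
        ∫ lam : Fin N → ℝ,
          (∏ i : Fin N, ∏ j ∈ Finset.Ioi i,
            ((lam j - lam i) * (lam j ^ r - lam i ^ r))) *
          ∏ k : Fin N, (ρ (lam k) * Real.exp (x * lam k + s * lam k ^ r)) := by
  classical
  set G : Fin N → ℝ → ℝ := fun j l => g r (r * (j:ℕ)) ρ x s l with hG
  set V : (Fin N → ℝ) → ℝ := fun lam => (Matrix.vandermonde lam).det with hV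
  set P : (Fin N → ℝ) → ℝ := fun lam => ∏ i, G i (lam i) with hP
  set Q : (Fin N → ℝ) → ℝ :=
    fun lam => Matrix.det (Matrix.of fun j k : Fin N => G j (lam k)) with hQdef
  have hexp : ∀ a b : Fin N, (a:ℕ) + r * (b:ℕ) ≤ (N - 1) * (r + 1) := by
    intro a b
    have h1 : (a:ℕ) ≤ N - 1 := by have := a.isLt; omega
    have h2 : (b:ℕ) ≤ N - 1 := by have := b.isLt; omega
    calc (a:ℕ) + r * (b:ℕ) ≤ (N-1) + r * (N-1) := Nat.add_le_add h1 (Nat.mul_le_mul le_rfl h2)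
      _ = (N - 1) * (r + 1) := by ring
  have hfact : ∀ (p q : Fin N → Fin N),
      Integrable (fun lam : Fin N → ℝ => ∏ k, ((lam k) ^ ((p k:ℕ)) * G (q k) (lam k))) := by
    intro p q
    refine Integrable.fintype_prod (f := fun k l => l ^ ((p k:ℕ)) * G (q k) l) (fun k => ?_)
    show Integrable (fun l : ℝ => l ^ ((p k:ℕ)) * G (q k) l) volume
    have h : (fun l : ℝ => l ^ ((p k:ℕ)) * G (q k) l) = g r ((p k:ℕ) + r * (q k:ℕ)) ρ x s := by
      funext l; simp only [hG, g, pow_add]; ring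
    rw [h]
    exact integrable_g hρ hint (hexp _ _) x s
  have hfactB : ∀ σ τ : Equiv.Perm (Fin N),
      Integrable (fun lam : Fin N → ℝ => ∏ k, ((lam k) ^ ((σ k:ℕ)) * G (τ k) (lam k))) :=
    fun σ τ => hfact ⇑σ ⇑τ
  have hfactA : ∀ σ : Equiv.Perm (Fin N),
      Integrable (fun lam : Fin N → ℝ => ∏ i, ((lam i) ^ ((σ i:ℕ)) * G i (lam i))) :=
    fun σ => hfact ⇑σ (fun i => i)
  have hVf : ∀ lam : Fin N → ℝ,
      ∑ σ : Equiv.Perm (Fin N), ((Equiv.Perm.sign σ : ℤ):ℝ) * ∏ i, (lam i) ^ ((σ i:ℕ))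
        = V lam := by
    intro lam
    show _ = (Matrix.vandermonde lam).det
    rw [← Matrix.det_transpose, Matrix.det_apply']
    simp [Matrix.vandermonde]
  have hsgn : ∀ τ : Equiv.Perm (Fin N), ((Equiv.Perm.sign τ : ℤ):ℝ) * ((Equiv.Perm.sign τ : ℤ):ℝ) = 1 := by
    intro τ
    rw [← Int.cast_mul, ← Units.val_mul, Int.units_mul_self, Units.val_one, Int.cast_one]
  -- Step 1: det = ∫ V * P
  have keyA : Matrix.det (Matrix.of fun i j : Fin N => I r ((i:ℕ) + r * (j:ℕ)) ρ x s)
      = ∫ lam : Fin N → ℝ, V lam * P lam := by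
    have hEntry : (Matrix.of fun i j : Fin N => I r ((i:ℕ) + r * (j:ℕ)) ρ x s)
        = Matrix.of fun i j : Fin N => ∫ l : ℝ, l ^ (i:ℕ) * G j l := by
      ext i j
      simp only [Matrix.of_apply]
      unfold I
      congr 1
      funext l
      simp only [hG, g, pow_add]; ring
    rw [hEntry, Matrix.det_apply']
    calc ∑ σ : Equiv.Perm (Fin N), ((Equiv.Perm.sign σ : ℤ):ℝ) *
            ∏ i, (Matrix.of fun i j : Fin N => ∫ l : ℝ, l ^ (i:ℕ) * G j l) (σ i) i
        = ∑ σ : Equiv.Perm (Fin N), ∫ lam : Fin N → ℝ, ((Equiv.Perm.sign σ : ℤ):ℝ) *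
            ∏ i, ((lam i) ^ ((σ i:ℕ)) * G i (lam i)) := by
          refine Finset.sum_congr rfl fun σ _ => ?_
          rw [integral_const_mul]
          congr 1
          simp only [Matrix.of_apply]
          rw [← MeasureTheory.integral_fintype_prod_eq_prod (ι := Fin N)
            (f := fun i l => l ^ ((σ i:ℕ)) * G i l)]
          rw [← MeasureTheory.volume_pi]
      _ = ∫ lam : Fin N → ℝ, ∑ σ : Equiv.Perm (Fin N), ((Equiv.Perm.sign σ : ℤ):ℝ) *
            ∏ i, ((lam i) ^ ((σ i:ℕ)) * G i (lam i)) :=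
          (integral_finset_sum Finset.univ fun (σ : Equiv.Perm (Fin N)) _ =>
            ((hfactA σ).const_mul _)).symm
      _ = ∫ lam : Fin N → ℝ, V lam * P lam := by
          congr 1
          funext lam
          calc ∑ σ : Equiv.Perm (Fin N), ((Equiv.Perm.sign σ : ℤ):ℝ) *
                  ∏ i, ((lam i) ^ ((σ i:ℕ)) * G i (lam i))
              = ∑ σ : Equiv.Perm (Fin N), (((Equiv.Perm.sign σ : ℤ):ℝ) *
                  ∏ i, (lam i) ^ ((σ i:ℕ))) * ∏ i, G i (lam i) := by
                refine Finset.sum_congr rfl fun σ _ => ?_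
                rw [Finset.prod_mul_distrib]; ring
            _ = (∑ σ : Equiv.Perm (Fin N), ((Equiv.Perm.sign σ : ℤ):ℝ) *
                  ∏ i, (lam i) ^ ((σ i:ℕ))) * ∏ i, G i (lam i) := (Finset.sum_mul _ _ _).symm
            _ = V lam * P lam := by rw [hVf lam]
  -- integrability of each symmetrized term
  have hTint : ∀ τ : Equiv.Perm (Fin N),
      Integrable (fun lam : Fin N → ℝ => V lam * ∏ k, G (τ k) (lam k)) := by
    intro τ
    have h : (fun lam : Fin N → ℝ => V lam * ∏ k, G (τ k) (lam k))
        = fun lam => ∑ σ : Equiv.Perm (Fin N), ((Equiv.Perm.sign σ : ℤ):ℝ) *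
            ∏ k, ((lam k) ^ ((σ k:ℕ)) * G (τ k) (lam k)) := by
      funext lam
      rw [← hVf lam, Finset.sum_mul]
      refine Finset.sum_congr rfl fun σ _ => ?_
      rw [Finset.prod_mul_distrib]; ring
    rw [h]
    exact integrable_finset_sum _ fun (σ : Equiv.Perm (Fin N)) _ => ((hfactB σ τ).const_mul _)
  -- change of variables by a permutation
  have hcomp : ∀ τ : Equiv.Perm (Fin N),
      (∫ lam : Fin N → ℝ, V lam * ∏ k, G (τ k) (lam k))
        = ((Equiv.Perm.sign τ : ℤ):ℝ) * ∫ lam : Fin N → ℝ, V lam * P lam := by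
    intro τ
    have e := MeasureTheory.volume_measurePreserving_piCongrLeft (fun _ : Fin N => ℝ) τ.symm
    have hev : ∀ lam : Fin N → ℝ,
        (MeasurableEquiv.piCongrLeft (fun _ : Fin N => ℝ) τ.symm) lam = fun k => lam (τ k) := by
      intro lam
      funext k
      have h1 := MeasurableEquiv.piCongrLeft_apply_apply (τ.symm) (β := fun _ : Fin N => ℝ)
        lam (τ k)
      rwa [Equiv.symm_apply_apply] at h1
    rw [← e.integral_comp' (fun lam => V lam * ∏ k, G (τ k) (lam k))]
    have hint2 : ∀ lam : Fin N → ℝ,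
        V ((MeasurableEquiv.piCongrLeft (fun _ : Fin N => ℝ) τ.symm) lam) *
          ∏ k, G (τ k) (((MeasurableEquiv.piCongrLeft (fun _ : Fin N => ℝ) τ.symm) lam) k)
        = ((Equiv.Perm.sign τ : ℤ):ℝ) * (V lam * P lam) := by
      intro lam
      rw [hev lam]
      have hVperm : V (fun k => lam (τ k)) = ((Equiv.Perm.sign τ : ℤ):ℝ) * V lam := by
        have h1 : Matrix.vandermonde (fun k => lam (τ k))
            = (Matrix.vandermonde lam).submatrix τ id := by
          ext i j
          simp [Matrix.vandermonde_apply, Matrix.submatrix_apply]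
        show (Matrix.vandermonde fun k => lam (τ k)).det = _
        rw [h1, Matrix.det_permute]
      have hPperm : (∏ k, G (τ k) (lam (τ k))) = P lam :=
        Equiv.prod_comp τ (fun k => G k (lam k))
      rw [hVperm, hPperm]
      ring
    simp_rw [hint2]
    rw [integral_const_mul]
  -- symmetrization
  have hsym : (∫ lam : Fin N → ℝ, V lam * Q lam)
      = (N.factorial : ℝ) * ∫ lam : Fin N → ℝ, V lam * P lam := by
    have hQ : ∀ lam : Fin N → ℝ, V lam * Q lam
        = ∑ τ : Equiv.Perm (Fin N), ((Equiv.Perm.sign τ : ℤ):ℝ) *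
            (V lam * ∏ k, G (τ k) (lam k)) := by
      intro lam
      rw [hQdef]
      show V lam * (Matrix.of fun j k : Fin N => G j (lam k)).det = _
      rw [Matrix.det_apply', Finset.mul_sum]
      refine Finset.sum_congr rfl fun τ _ => ?_
      simp only [Matrix.of_apply]
      ring
    simp_rw [hQ]
    rw [integral_finset_sum Finset.univ fun τ _ => ((hTint τ).const_mul _)]
    calc ∑ τ : Equiv.Perm (Fin N), ∫ lam : Fin N → ℝ, ((Equiv.Perm.sign τ : ℤ):ℝ) *
            (V lam * ∏ k, G (τ k) (lam k))
        = ∑ τ : Equiv.Perm (Fin N), ((Equiv.Perm.sign τ : ℤ):ℝ) *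
            (((Equiv.Perm.sign τ : ℤ):ℝ) * ∫ lam : Fin N → ℝ, V lam * P lam) := by
          refine Finset.sum_congr rfl fun τ _ => ?_
          rw [integral_const_mul, hcomp τ]
      _ = ∑ _τ : Equiv.Perm (Fin N), ∫ lam : Fin N → ℝ, V lam * P lam := by
          refine Finset.sum_congr rfl fun τ _ => ?_
          rw [← mul_assoc, hsgn τ, one_mul]
      _ = (N.factorial : ℝ) * ∫ lam : Fin N → ℝ, V lam * P lam := by
          rw [Finset.sum_const, Finset.card_univ, Fintype.card_perm, Fintype.card_fin,
            nsmul_eq_mul]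
  -- identification of the integrand
  have hQP : ∀ lam : Fin N → ℝ, V lam * Q lam
      = (∏ i : Fin N, ∏ j ∈ Finset.Ioi i, ((lam j - lam i) * (lam j ^ r - lam i ^ r))) *
        ∏ k : Fin N, (ρ (lam k) * Real.exp (x * lam k + s * lam k ^ r)) := by
    intro lam
    have h1 : V lam = ∏ i : Fin N, ∏ j ∈ Finset.Ioi i, (lam j - lam i) :=
      Matrix.det_vandermonde lam
    have h3 : (Matrix.of fun j k : Fin N => G j (lam k))
        = Matrix.of (fun j k : Fin N => (ρ (lam k) * Real.exp (x * lam k + s * lam k ^ r)) *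
            (Matrix.vandermonde (fun k => lam k ^ r)).transpose j k) := by
      ext j k
      simp only [Matrix.of_apply, hG, g, Matrix.transpose_apply, Matrix.vandermonde_apply,
        pow_mul]
      ring
    have h2 : Q lam = (∏ k : Fin N, (ρ (lam k) * Real.exp (x * lam k + s * lam k ^ r))) *
        ∏ i : Fin N, ∏ j ∈ Finset.Ioi i, (lam j ^ r - lam i ^ r) := by
      rw [hQdef]
      show (Matrix.of fun j k : Fin N => G j (lam k)).det = _
      rw [h3, Matrix.det_mul_row, Matrix.det_transpose, Matrix.det_vandermonde]
    have h4 : (∏ i : Fin N, ∏ j ∈ Finset.Ioi i, ((lam j - lam i) * (lam j ^ r - lam i ^ r)))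
        = (∏ i : Fin N, ∏ j ∈ Finset.Ioi i, (lam j - lam i)) *
          ∏ i : Fin N, ∏ j ∈ Finset.Ioi i, (lam j ^ r - lam i ^ r) := by
      rw [← Finset.prod_mul_distrib]
      exact Finset.prod_congr rfl fun i _ => Finset.prod_mul_distrib
    rw [h1, h2, h4]
    ring
  -- conclusion
  have hfac : (N.factorial : ℝ) ≠ 0 := Nat.cast_ne_zero.2 (Nat.factorial_ne_zero N)
  rw [keyA]
  have hfin : (∫ lam : Fin N → ℝ,
      (∏ i : Fin N, ∏ j ∈ Finset.Ioi i, ((lam j - lam i) * (lam j ^ r - lam i ^ r))) *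
        ∏ k : Fin N, (ρ (lam k) * Real.exp (x * lam k + s * lam k ^ r)))
      = ∫ lam : Fin N → ℝ, V lam * Q lam := by
    congr 1
    funext lam
    rw [hQP lam]
  rw [hfin, hsym]
  field_simp
end Andreief
end Stmt7Aux

theorem stmt7 (N r : ℕ) (hN : 1 ≤ N) (hr : 1 ≤ r) (ρ : ℝ → ℝ) (hρ : Measurable ρ)
    (hint : ∀ x s : ℝ, Integrable (fun l : ℝ =>
      (1 + |l|) ^ ((N - 1) * (r + 1)) * |ρ l| * Real.exp (x * l + s * l ^ r)))
    (Φ : ℝ → ℝ → ℝ)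
    (hΦ : ∀ x s, Φ x s = ∫ l : ℝ, ρ l * Real.exp (x * l + s * l ^ r)) :
    (∀ x : ℝ, ContDiff ℝ ((N - 1 : ℕ) : ℕ∞) (fun s => Φ x s)) ∧
    (∀ j : ℕ, j ≤ N - 1 → ∀ s : ℝ,
      ContDiff ℝ ((N - 1 : ℕ) : ℕ∞)
        (fun x => iteratedDeriv j (fun s' => Φ x s') s)) ∧
    (∀ i j : ℕ, i ≤ N - 1 → j ≤ N - 1 → ∀ x s : ℝ,
      iteratedDeriv i (fun x' => iteratedDeriv j (fun s' => Φ x' s') s) x =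
        ∫ l : ℝ, l ^ (i + r * j) * ρ l * Real.exp (x * l + s * l ^ r)) ∧
    (∀ x s : ℝ,
      Matrix.det (Matrix.of fun i j : Fin N =>
        iteratedDeriv (i : ℕ)
          (fun x' => iteratedDeriv (j : ℕ) (fun s' => Φ x' s') s) x) =
      (1 / (N.factorial : ℝ)) *
        ∫ lam : Fin N → ℝ,
          (∏ i : Fin N, ∏ j ∈ Finset.Ioi i,
            ((lam j - lam i) * (lam j ^ r - lam i ^ r))) *
          ∏ k : Fin N, (ρ (lam k) * Real.exp (x * lam k + s * lam k ^ r))) := by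
  have hΦI : ∀ x : ℝ, (fun s => Φ x s) = fun s => Stmt7Aux.I r 0 ρ x s := by
    intro x
    funext s
    rw [hΦ x s]
    simp [Stmt7Aux.I, Stmt7Aux.g]
  have hb1 : ∀ j : ℕ, j ≤ N - 1 → 0 + r * j ≤ (N - 1) * (r + 1) := by
    intro j hj
    calc 0 + r * j = r * j := by ring
      _ ≤ r * (N - 1) := Nat.mul_le_mul le_rfl hj
      _ ≤ (N - 1) * (r + 1) := by
        calc r * (N - 1) ≤ (N - 1) * r + (N - 1) := by rw [mul_comm]; omega
          _ = (N - 1) * (r + 1) := by ring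
  have hb2 : ∀ i j : ℕ, i ≤ N - 1 → j ≤ N - 1 → 0 + r * j + i ≤ (N - 1) * (r + 1) := by
    intro i j hi hj
    calc 0 + r * j + i ≤ r * (N - 1) + (N - 1) := by
          have := Nat.mul_le_mul (le_refl r) hj
          omega
      _ = (N - 1) * (r + 1) := by ring
  have hinner : ∀ j : ℕ, j ≤ N - 1 → ∀ s : ℝ,
      (fun x' => iteratedDeriv j (fun s' => Φ x' s') s)
        = fun x' => Stmt7Aux.I r (0 + r * j) ρ x' s := by
    intro j hj s
    funext x'
    rw [hΦI x', Stmt7Aux.iter_I_s hρ hint hr j 0 (hb1 j hj) x' s]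
  have key : ∀ i j : ℕ, i ≤ N - 1 → j ≤ N - 1 → ∀ x s : ℝ,
      iteratedDeriv i (fun x' => iteratedDeriv j (fun s' => Φ x' s') s) x
        = Stmt7Aux.I r (i + r * j) ρ x s := by
    intro i j hi hj x s
    rw [hinner j hj s, Stmt7Aux.iter_I_x hρ hint hr i (0 + r * j) (hb2 i j hi hj) x s]
    congr 1
    omega
  refine ⟨?_, ?_, ?_, ?_⟩
  · intro x
    rw [hΦI x]
    exact Stmt7Aux.contDiff_I_s hρ hint hr (N - 1) 0 (hb1 (N - 1) le_rfl) x
  · intro j hj s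
    rw [hinner j hj s]
    exact Stmt7Aux.contDiff_I_x hρ hint hr (N - 1) (0 + r * j) (hb2 (N - 1) j le_rfl hj) s
  · intro i j hi hj x s
    rw [key i j hi hj x s]
    simp [Stmt7Aux.I, Stmt7Aux.g]
  · intro x s
    have hM : (Matrix.of fun i j : Fin N =>
        iteratedDeriv (i : ℕ)
          (fun x' => iteratedDeriv (j : ℕ) (fun s' => Φ x' s') s) x)
        = Matrix.of fun i j : Fin N => Stmt7Aux.I r ((i : ℕ) + r * (j : ℕ)) ρ x s := by
      ext i j
      simp only [Matrix.of_apply]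
      exact key i j (by have := i.isLt; omega) (by have := j.isLt; omega) x s
    rw [hM]
    exact Stmt7Aux.andreief hρ hint hN x s
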